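/- Let n ∈ ℕ and let A be a complex n×n matrix all of whose eigenvalues have strictly negative real part. Then the Lyapunov operator X ↦ A·X + X·Aᴴ is an injective (hence bijective) linear map on the space of complex n×n matrices; in particular, for every right-hand side Q the stationary Lyapunov equation A·X + X·Aᴴ + Q = 0 has a unique solution. -/

import Mathlib

open Matrix Polynomial

lemma eval_charpoly_aux {n : ℕ} (A : Matrix (Fin n) (Fin n) ℂ) (μ : ℂ) :
    A.charpoly.eval μ = (μ • (1 : Matrix (Fin n) (Fin n) ℂ) - A).det := by
  rw [Matrix.charpoly, ← Polynomial.coe_evalRingHom, RingHom.map_det]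
  congr 1
  ext i j
  by_cases h : i = j
  · subst h
    simp [Matrix.charmatrix_apply_eq, Matrix.one_apply]
  · simp [Matrix.charmatrix_apply_ne _ _ _ h, Matrix.one_apply, h]

lemma root_mem_spectrum {n : ℕ} (A : Matrix (Fin n) (Fin n) ℂ) {μ : ℂ}
    (h : A.charpoly.IsRoot μ) : μ ∈ spectrum ℂ A := by
  rw [spectrum.mem_iff]
  intro hu
  rw [Matrix.isUnit_iff_isUnit_det] at hu
  rw [Polynomial.IsRoot, eval_charpoly_aux] at h
  have : (algebraMap ℂ (Matrix (Fin n) (Fin n) ℂ)) μ - A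
      = μ • (1 : Matrix (Fin n) (Fin n) ℂ) - A := by
    simp [Algebra.algebraMap_eq_smul_one]
  rw [this, h] at hu
  exact hu.ne_zero rfl


lemma aeval_prod_unit {n : ℕ} (B : Matrix (Fin n) (Fin n) ℂ) (s : Multiset ℂ)
    (h : ∀ r ∈ s, IsUnit (Polynomial.aeval B (Polynomial.X - Polynomial.C r))) :
    IsUnit (Polynomial.aeval B (s.map fun r => Polynomial.X - Polynomial.C r).prod) := by
  induction s using Multiset.induction_on with
  | empty => simp
  | cons r s ih =>
      simp only [Multiset.map_cons, Multiset.prod_cons, _root_.map_mul]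
      exact (h r (Multiset.mem_cons_self _ _)).mul
        (ih fun x hx => h x (Multiset.mem_cons_of_mem hx))

theorem lyapunov_operator_injective_of_stable (n : ℕ)
    (A : Matrix (Fin n) (Fin n) ℂ)
    (hspec : ∀ μ ∈ spectrum ℂ A, μ.re < 0) :
    Function.Injective (fun X : Matrix (Fin n) (Fin n) ℂ => A * X + X * Aᴴ) ∧
      ∀ Q : Matrix (Fin n) (Fin n) ℂ, ∃! X : Matrix (Fin n) (Fin n) ℂ,
        A * X + X * Aᴴ + Q = 0 := by
  set B : Matrix (Fin n) (Fin n) ℂ := -Aᴴ with hB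
  set L : Matrix (Fin n) (Fin n) ℂ →ₗ[ℂ] Matrix (Fin n) (Fin n) ℂ :=
    LinearMap.mulLeft ℂ A + LinearMap.mulRight ℂ Aᴴ with hL
  have hLapp : ∀ X : Matrix (Fin n) (Fin n) ℂ, L X = A * X + X * Aᴴ := fun X => rfl
  have hinj : Function.Injective L := by
    rw [← LinearMap.ker_eq_bot, LinearMap.ker_eq_bot']
    intro X hX
    rw [hLapp] at hX
    have hcomm : A * X = X * B := by
      rw [hB]
      linear_combination (norm := noncomm_ring) hX
    have hpow : ∀ k : ℕ, A ^ k * X = X * B ^ k := by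
      intro k
      induction k with
      | zero => simp
      | succ k ih =>
          rw [pow_succ', mul_assoc, ih, ← mul_assoc, hcomm, mul_assoc, ← pow_succ']
    have hpoly : ∀ p : ℂ[X], (aeval A p) * X = X * (aeval B p) := by
      intro p
      induction p using Polynomial.induction_on' with
      | add p q hp hq => simp [map_add, add_mul, mul_add, hp, hq]
      | monomial k c =>
          simp only [aeval_monomial]
          rw [mul_assoc, hpow k, ← mul_assoc, Algebra.commutes, mul_assoc,
            Algebra.commutes c (B ^ k)]
    have hCH := hpoly A.charpoly
    rw [Matrix.aeval_self_charpoly, zero_mul] at hCH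
    have hsplit : A.charpoly =
        (A.charpoly.roots.map fun r => Polynomial.X - Polynomial.C r).prod := by
      conv_lhs => rw [(IsAlgClosed.splits A.charpoly).eq_prod_roots_of_monic
        A.charpoly_monic]
    have hunit : IsUnit (aeval B A.charpoly) := by
      rw [hsplit]
      apply aeval_prod_unit
      intro r hr
      have hrspec : r ∈ spectrum ℂ A :=
        root_mem_spectrum A ((Polynomial.mem_roots A.charpoly_monic.ne_zero).mp hr)
      have hre : r.re < 0 := hspec r hrspec
      have heq : (aeval B) (Polynomial.X - Polynomial.C r) = B - r • 1 := by
        simp [Algebra.algebraMap_eq_smul_one]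
      rw [heq]
      have hform : B - r • (1 : Matrix (Fin n) (Fin n) ℂ)
          = -((A + (starRingEnd ℂ r) • 1)ᴴ) := by
        rw [hB]
        simp only [conjTranspose_add, conjTranspose_smul, neg_add, Complex.star_def,
          conjTranspose_one, Complex.conj_conj]
        abel
      rw [hform, IsUnit.neg_iff, Matrix.isUnit_iff_isUnit_det, Matrix.det_conjTranspose,
        isUnit_star, ← Matrix.isUnit_iff_isUnit_det]
      by_contra hnu
      have hmem : -(starRingEnd ℂ r) ∈ spectrum ℂ A := by
        rw [spectrum.mem_iff]
        have h2 : (algebraMap ℂ (Matrix (Fin n) (Fin n) ℂ)) (-(starRingEnd ℂ r)) - A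
            = -(A + (starRingEnd ℂ r) • 1) := by
          simp [Algebra.algebraMap_eq_smul_one]
          abel
        rw [h2, IsUnit.neg_iff]
        exact hnu
      have := hspec _ hmem
      simp only [Complex.neg_re, Complex.conj_re] at this
      linarith
    obtain ⟨u, hu⟩ := hunit
    calc X = X * (↑u * ↑u⁻¹) := by rw [Units.mul_inv, mul_one]
    _ = X * ↑u * ↑u⁻¹ := by rw [mul_assoc]
    _ = 0 := by rw [hu, ← hCH, zero_mul]
  constructor
  · intro X Y hXY
    exact hinj (by simpa [hLapp] using hXY)
  · have hLsurj : Function.Surjective L := (LinearMap.injective_iff_surjective).mp hinj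
    intro Q
    obtain ⟨X, hX⟩ := hLsurj (-Q)
    rw [hLapp] at hX
    refine ⟨X, show A * X + X * Aᴴ + Q = 0 by rw [hX]; abel, ?_⟩
    intro Y hY
    apply hinj
    rw [hLapp, hLapp, hX]
    exact eq_neg_of_add_eq_zero_left hY
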